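/- (Separation-of-variables characterization) Let B : [l,L] → ℝ be C¹ with B' > 0 and let a, b : [0,p] → ℝ be Lipschitz with a(θ)B(z) + b(θ) > 0 on [0,p]×[l,L]. Define A_z(z) = B'(z) and A_θ(θ,z) = a(θ)B(z) + b(θ). If there exist functions H(θ) > 0 and G(z) > 0 with A_z/A_θ = H(θ)/G(z) on [0,p]×[l,L], and B is non-constant, then a and b are linearly dependent: there exists λ₀ ∈ ℝ with a = λ₀ b or b = λ₀ a. -/
import Mathlib


/-- Separation-of-variables characterization (Case 1): if
`A_z/A_θ = H(θ)/G(z)` with `A_z = B'`, `A_θ = aB + b` and `B` non-constant,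
then `a` and `b` are linearly dependent. -/
theorem separation_of_variables_linear_dependence (p l L : ℝ) (hp : 0 < p)
    (hlL : l < L) (B : ℝ → ℝ) (hB : ContDiff ℝ 1 B)
    (hB' : ∀ z ∈ Set.Icc l L, 0 < deriv B z)
    (a b : ℝ → ℝ) (K : NNReal)
    (ha : LipschitzOnWith K a (Set.Icc 0 p))
    (hb : LipschitzOnWith K b (Set.Icc 0 p))
    (hAθ : ∀ θ ∈ Set.Icc 0 p, ∀ z ∈ Set.Icc l L, 0 < a θ * B z + b θ)
    (H G : ℝ → ℝ)
    (hH : ∀ θ ∈ Set.Icc 0 p, 0 < H θ)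
    (hG : ∀ z ∈ Set.Icc l L, 0 < G z)
    (hsep : ∀ θ ∈ Set.Icc 0 p, ∀ z ∈ Set.Icc l L,
      deriv B z / (a θ * B z + b θ) = H θ / G z)
    (hBnc : ¬ ∃ c₀ : ℝ, ∀ z ∈ Set.Icc l L, B z = c₀) :
    ∃ lam : ℝ, (∀ θ ∈ Set.Icc 0 p, a θ = lam * b θ) ∨
      (∀ θ ∈ Set.Icc 0 p, b θ = lam * a θ) := by
  -- Cross-multiplied separation identity
  have key : ∀ θ ∈ Set.Icc 0 p, ∀ z ∈ Set.Icc l L,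
      deriv B z * G z = H θ * (a θ * B z + b θ) := by
    intro θ hθ z hz
    have h1 := hsep θ hθ z hz
    have h2 := hAθ θ hθ z hz
    have h3 := hG z hz
    rw [div_eq_div_iff h2.ne' h3.ne'] at h1
    linarith [h1]
  -- Two points with different B values
  obtain ⟨z₁, hz₁, hzne⟩ : ∃ z ∈ Set.Icc l L, B z ≠ B l := by
    push_neg at hBnc
    exact hBnc (B l)
  have hl : l ∈ Set.Icc l L := ⟨le_refl l, hlL.le⟩
  have h0 : (0 : ℝ) ∈ Set.Icc 0 p := ⟨le_refl 0, hp.le⟩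
  -- For any θ, H θ * a θ = H 0 * a 0 and H θ * b θ = H 0 * b 0
  have hab : ∀ θ ∈ Set.Icc 0 p, H θ * a θ = H 0 * a 0 ∧ H θ * b θ = H 0 * b 0 := by
    intro θ hθ
    have e1 : H θ * (a θ * B z₁ + b θ) = H 0 * (a 0 * B z₁ + b 0) := by
      rw [← key θ hθ z₁ hz₁, key 0 h0 z₁ hz₁]
    have e2 : H θ * (a θ * B l + b θ) = H 0 * (a 0 * B l + b 0) := by
      rw [← key θ hθ l hl, key 0 h0 l hl]
    have hd : B z₁ - B l ≠ 0 := sub_ne_zero.mpr hzne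
    have ea : H θ * a θ = H 0 * a 0 := by
      have : (H θ * a θ - H 0 * a 0) * (B z₁ - B l) = 0 := by ring_nf; nlinarith [e1, e2]
      rcases mul_eq_zero.mp this with h | h
      · linarith [sub_eq_zero.mp h]
      · exact absurd h hd
    refine ⟨ea, ?_⟩
    have h := e2
    rw [mul_add, mul_add, ← mul_assoc, ← mul_assoc, ea] at h
    linarith
  by_cases hb0 : b 0 = 0
  · refine ⟨0, Or.inr ?_⟩
    intro θ hθ
    have := (hab θ hθ).2
    rw [hb0, mul_zero] at this
    have hHθ := hH θ hθ
    have : b θ = 0 := by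
      rcases mul_eq_zero.mp this with h | h
      · exact absurd h hHθ.ne'
      · exact h
    simp [this]
  · refine ⟨a 0 / b 0, Or.inl ?_⟩
    intro θ hθ
    obtain ⟨ea, eb⟩ := hab θ hθ
    have hHθ := (hH θ hθ).ne'
    field_simp
    -- goal: a θ * b 0 = a 0 * b θ (up to form)
    have : H θ * (a θ * b 0) = H θ * (a 0 * b θ) := by
      calc H θ * (a θ * b 0) = (H θ * a θ) * b 0 := by ring
        _ = (H 0 * a 0) * b 0 := by rw [ea]
        _ = a 0 * (H 0 * b 0) := by ring
        _ = a 0 * (H θ * b θ) := by rw [eb]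
        _ = H θ * (a 0 * b θ) := by ring
    have := mul_left_cancel₀ hHθ this
    linarith
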